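/- If a graph G admits a proper χ(G)-coloring c such that the digraph D_c contains a directed cycle, then G admits a proper χ(G)-coloring c' such that every vertex of G is the beginning of a directed path on χ(G) vertices in D_{c'} (equivalently, every vertex is the beginning of a colorful path). -/

import Mathlib

/-- A directed cycle: a closed walk of positive length in the digraph `D`. -/
def HasDCycle {V : Type} (D : V → V → Prop) : Prop :=
  ∃ (x : V) (l : List V), List.Chain D x (l ++ [x])

/-- Every element of `x :: l` has a `D`-successor inside `x :: l ++ [z]`. -/
private lemma chain_succ_aux {α : Type} (D : α → α → Prop) :
    ∀ (l : List α) (x z : α), List.Chain D x (l ++ [z]) →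
      ∀ w ∈ x :: l, ∃ u ∈ x :: (l ++ [z]), D w u := by
  intro l
  induction l with
  | nil =>
    intro x z h w hw
    rw [List.mem_singleton] at hw
    subst hw
    rw [List.nil_append, List.Chain, List.chain_cons] at h
    exact ⟨z, by simp, h.1⟩
  | cons y t ih =>
    intro x z h w hw
    rw [List.cons_append, List.Chain, List.chain_cons] at h
    rcases List.mem_cons.mp hw with rfl | hw'
    · exact ⟨y, by simp, h.1⟩
    · obtain ⟨u, hu, hDu⟩ := ih y z h.2 w hw'
      refine ⟨u, ?_, hDu⟩
      simp only [List.mem_cons, List.mem_append, List.mem_singleton] at hu ⊢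
      tauto

/-- Iterate a successor function to produce a list. -/
private def iterChain {V : Type} (f : V → V) : ℕ → V → List V
  | 0, v => [v]
  | n + 1, v => v :: iterChain f n (f v)

private lemma iterChain_length {V : Type} (f : V → V) :
    ∀ (n : ℕ) (v : V), (iterChain f n v).length = n + 1 := by
  intro n
  induction n with
  | zero => intro v; rfl
  | succ n ih => intro v; simp [iterChain, ih]

private lemma iterChain_head {V : Type} (f : V → V) :
    ∀ (n : ℕ) (v : V), (iterChain f n v).head? = some v := by
  intro n
  induction n with
  | zero => intro v; rfl
  | succ n _ => intro v; rfl

private lemma iterChain_chain' {V : Type} {R : V → V → Prop} (f : V → V)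
    (hf : ∀ v, R v (f v)) : ∀ (n : ℕ) (v : V), (iterChain f n v).Chain' R := by
  intro n
  induction n with
  | zero => intro v; exact List.isChain_singleton v
  | succ n ih =>
    intro v
    show List.Chain' R (v :: iterChain f n (f v))
    rw [List.Chain', List.isChain_cons]
    refine ⟨?_, ih (f v)⟩
    intro b hb
    rw [iterChain_head] at hb
    cases hb
    exact hf v

/-- The potential function used for the termination argument. -/
private def pot {V : Type} [Fintype V] (χ : ℕ) (p : V → V) (d : V → ℕ) (N M : ℕ)
    (c' : V → ZMod χ) : ℕ :=
  ∑ v, (c' (p v) - 1 - c' v).val * M ^ (N - d v)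

/-- Key lemma: by repeatedly bumping sinks we obtain a proper coloring
with no sinks at all. -/
private lemma no_sink {V : Type} [Fintype V] (G : SimpleGraph V) (χ : ℕ) [NeZero χ]
    (hχ2 : 2 ≤ χ) (x : V) (p : V → V) (d : V → ℕ)
    (hp : ∀ v, v ≠ x → G.Adj v (p v) ∧ d (p v) + 1 = d v)
    (hpx : p x = x)
    (xs : List V) (hxmem : x ∈ xs)
    (c₀ : V → ZMod χ)
    (hxs : ∀ w ∈ xs, ∃ u ∈ xs, G.Adj w u ∧ c₀ u = c₀ w + 1) :
    ∀ (n : ℕ) (c' : V → ZMod χ),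
      pot χ p d (Finset.univ.sup d + 1) (Fintype.card V * χ + 1) c' < n →
      (∀ u w, G.Adj u w → c' u ≠ c' w) →
      (∀ w ∈ xs, c' w = c₀ w) →
      ∃ c'' : V → ZMod χ, (∀ u w, G.Adj u w → c'' u ≠ c'' w) ∧
        ∀ v, ∃ u, G.Adj v u ∧ c'' u = c'' v + 1 := by
  classical
  set N : ℕ := Finset.univ.sup d + 1 with hN
  set M : ℕ := Fintype.card V * χ + 1 with hM
  have hdN : ∀ v, d v + 1 ≤ N := by
    intro v
    have := Finset.le_sup (f := d) (Finset.mem_univ v)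
    omega
  intro n
  induction n with
  | zero => intro c' h; omega
  | succ n ih =>
    intro c' hΦ hc' hinv
    by_cases hsink : ∀ v, ∃ u, G.Adj v u ∧ c' u = c' v + 1
    · exact ⟨c', hc', hsink⟩
    push_neg at hsink
    obtain ⟨v, hv⟩ := hsink
    have hvsink : ∀ u, G.Adj v u → c' u ≠ c' v + 1 := by
      intro u hadj heq
      exact (hv u) hadj heq
    have hvnotxs : v ∉ xs := by
      intro hmem
      obtain ⟨u, humem, hadj, hu⟩ := hxs v hmem
      exact hvsink u hadj (by rw [hinv u humem, hinv v hmem]; exact hu)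
    have hvx : v ≠ x := fun h => hvnotxs (h ▸ hxmem)
    obtain ⟨hpadj, hpd⟩ := hp v hvx
    have hpvne : p v ≠ v := fun h => G.loopless.irrefl v (by rwa [h] at hpadj)
    -- the sink has positive potential term
    have hφv : 1 ≤ (c' (p v) - 1 - c' v).val := by
      rcases Nat.eq_zero_or_pos ((c' (p v) - 1 - c' v).val) with h0 | h
      · exfalso
        have hz : c' (p v) - 1 - c' v = 0 := (ZMod.val_eq_zero _).mp h0
        have : c' (p v) = c' v + 1 := by linear_combination hz
        exact hvsink (p v) hpadj this
      · exact h
    -- bump the sink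
    set c₂ : V → ZMod χ := Function.update c' v (c' v + 1) with hc₂def
    have hc₂v : c₂ v = c' v + 1 := Function.update_self v _ c'
    have hc₂ne : ∀ u, u ≠ v → c₂ u = c' u := fun u h => Function.update_of_ne h _ c'
    have hproper₂ : ∀ u w, G.Adj u w → c₂ u ≠ c₂ w := by
      intro a b hadj
      by_cases ha : a = v <;> by_cases hb : b = v
      · rw [ha, hb] at hadj; exact absurd hadj (G.loopless.irrefl v)
      · rw [ha] at hadj ⊢
        rw [hc₂v, hc₂ne b hb]
        exact fun h => hvsink b hadj h.symm
      · rw [hb] at hadj ⊢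
        rw [hc₂v, hc₂ne a ha]
        exact hvsink a hadj.symm
      · rw [hc₂ne a ha, hc₂ne b hb]; exact hc' a b hadj
    have hinv₂ : ∀ w ∈ xs, c₂ w = c₀ w := fun w hw => by
      rw [hc₂ne w (fun h => hvnotxs (h ▸ hw)), hinv w hw]
    -- the potential strictly decreases
    have hφ₂v : (c₂ (p v) - 1 - c₂ v).val + 1 = (c' (p v) - 1 - c' v).val := by
      have hzz : c₂ (p v) - 1 - c₂ v = (c' (p v) - 1 - c' v) - 1 := by
        rw [hc₂ne (p v) hpvne, hc₂v]; ring
      rw [hzz]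
      set z := c' (p v) - 1 - c' v with hzdef
      have hzχ : z.val < χ := ZMod.val_lt z
      have h1 : ((z.val - 1 : ℕ) : ZMod χ) = z - 1 := by
        have h2 : ((z.val : ℕ) : ZMod χ) = z := by
          rw [ZMod.natCast_val, ZMod.cast_id]
        rw [Nat.cast_sub hφv, h2, Nat.cast_one]
      rw [← h1, ZMod.val_cast_of_lt (by omega)]
      omega
    have hdec : pot χ p d N M c₂ < pot χ p d N M c' := by
      have hvmem : v ∈ (Finset.univ : Finset V) := Finset.mem_univ v
      have hsplit₂ := Finset.add_sum_erase Finset.univ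
        (fun u => (c₂ (p u) - 1 - c₂ u).val * M ^ (N - d u)) hvmem
      have hsplit₁ := Finset.add_sum_erase Finset.univ
        (fun u => (c' (p u) - 1 - c' u).val * M ^ (N - d u)) hvmem
      set E : ℕ := M ^ (N - d v - 1) with hE
      have hE1 : 1 ≤ E := Nat.one_le_pow _ _ (by omega)
      have hexp : M ^ (N - d v) = E * M := by
        rw [hE, ← pow_succ]
        congr 1
        have := hdN v
        omega
      -- bound each term off `v`
      have hterm : ∀ u ∈ Finset.univ.erase v,
          (c₂ (p u) - 1 - c₂ u).val * M ^ (N - d u) ≤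
          (c' (p u) - 1 - c' u).val * M ^ (N - d u) + χ * E := by
        intro u hu
        have huv : u ≠ v := (Finset.mem_erase.mp hu).1
        by_cases hpu : p u = v
        · -- child of v : use crude bound
          have hux : u ≠ x := by
            intro h
            rw [h, hpx] at hpu
            exact hvx hpu.symm
          have hdu : d v + 1 = d u := by
            have := (hp u hux).2
            rw [hpu] at this
            exact this
          have hexpu : M ^ (N - d u) = E := by
            rw [hE]; congr 1; omega
          have hval : (c₂ (p u) - 1 - c₂ u).val ≤ χ :=
            Nat.le_of_lt (ZMod.val_lt _)
          calc (c₂ (p u) - 1 - c₂ u).val * M ^ (N - d u)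
              ≤ χ * M ^ (N - d u) := Nat.mul_le_mul_right _ hval
            _ = χ * E := by rw [hexpu]
            _ ≤ (c' (p u) - 1 - c' u).val * M ^ (N - d u) + χ * E := Nat.le_add_left _ _
        · -- unchanged term
          rw [hc₂ne u huv, hc₂ne (p u) hpu]
          exact Nat.le_add_right _ _
      have hsum : ∑ u ∈ Finset.univ.erase v,
            (c₂ (p u) - 1 - c₂ u).val * M ^ (N - d u) ≤
          (∑ u ∈ Finset.univ.erase v,
            (c' (p u) - 1 - c' u).val * M ^ (N - d u)) + Fintype.card V * (χ * E) := by
        calc ∑ u ∈ Finset.univ.erase v, (c₂ (p u) - 1 - c₂ u).val * M ^ (N - d u)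
            ≤ ∑ u ∈ Finset.univ.erase v,
              ((c' (p u) - 1 - c' u).val * M ^ (N - d u) + χ * E) :=
              Finset.sum_le_sum hterm
          _ = (∑ u ∈ Finset.univ.erase v,
              (c' (p u) - 1 - c' u).val * M ^ (N - d u)) +
              (Finset.univ.erase v).card * (χ * E) := by
              rw [Finset.sum_add_distrib, Finset.sum_const, smul_eq_mul]
          _ ≤ _ := by
              have hcard : (Finset.univ.erase v).card ≤ Fintype.card V :=
                le_trans (Finset.card_erase_le) (le_of_eq (Finset.card_univ))
              exact Nat.add_le_add_left (Nat.mul_le_mul_right _ hcard) _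
      have hMbig : Fintype.card V * χ < M := by rw [hM]; omega
      unfold pot
      rw [← hsplit₂, ← hsplit₁]
      set A := (c' (p v) - 1 - c' v).val with hA
      set B := (c₂ (p v) - 1 - c₂ v).val with hB
      set S₁ := ∑ u ∈ Finset.univ.erase v, (c' (p u) - 1 - c' u).val * M ^ (N - d u)
      set S₂ := ∑ u ∈ Finset.univ.erase v, (c₂ (p u) - 1 - c₂ u).val * M ^ (N - d u)
      rw [hexp]
      -- B + 1 = A, S₂ ≤ S₁ + card * (χ * E), card * χ < M, 1 ≤ E
      have h1 : B * (E * M) + M * E ≤ A * (E * M) := by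
        have : (B + 1) * (E * M) = A * (E * M) := by rw [hφ₂v]
        nlinarith
      have h2 : Fintype.card V * (χ * E) < M * E := by
        calc Fintype.card V * (χ * E) = (Fintype.card V * χ) * E := by ring
          _ < M * E := by
            have := hMbig
            nlinarith
      omega
    exact ih c₂ (by omega) hproper₂ hinv₂

/-- If some proper `χ(G)`-coloring `c` yields a digraph `D_c` with a directed
cycle, then some proper `χ(G)`-coloring `c'` is such that every vertex begins
a directed path on `χ(G)` vertices in `D_{c'}` (a colorful path). -/
theorem colorful_from_dcycle {V : Type} [Fintype V] (G : SimpleGraph V)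
    (hG : G.Connected) (χ : ℕ) (hχ : G.chromaticNumber = χ)
    (c : V → ZMod χ) (hc : ∀ u w, G.Adj u w → c u ≠ c w)
    (hcyc : HasDCycle (fun a b => G.Adj a b ∧ c b = c a + 1)) :
    ∃ c' : V → ZMod χ,
      (∀ u w, G.Adj u w → c' u ≠ c' w) ∧
      ∀ v : V, ∃ l : List V,
        l.Chain' (fun a b => G.Adj a b ∧ c' b = c' a + 1) ∧
        l.head? = some v ∧ l.length = χ := by
  classical
  obtain ⟨x, l, hchain⟩ := hcyc
  have hV : Nonempty V := hG.nonempty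
  have hχ0 : χ ≠ 0 := by
    intro h
    subst h
    have hEmpty := SimpleGraph.isEmpty_of_chromaticNumber_eq_zero (G := G) (by rw [hχ]; norm_num)
    exact hEmpty.elim hV.some
  haveI : NeZero χ := ⟨hχ0⟩
  have harc : ∃ a b, G.Adj a b ∧ c b = c a + 1 := by
    cases l with
    | nil =>
      rw [List.nil_append, List.Chain, List.chain_cons] at hchain
      exact absurd hchain.1.1 (G.loopless.irrefl x)
    | cons y t =>
      rw [List.cons_append, List.Chain, List.chain_cons] at hchain
      exact ⟨x, y, hchain.1⟩
  have hone : (1 : ZMod χ) ≠ 0 := by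
    obtain ⟨a, b, hab, hb⟩ := harc
    intro h1
    exact hc a b hab (by rw [hb, h1, add_zero])
  have hχ1 : χ ≠ 1 := by rintro rfl; exact hone (Subsingleton.elim _ _)
  have hχ2 : 2 ≤ χ := by omega
  -- successor property on the cycle
  have hxs : ∀ w ∈ x :: l, ∃ u ∈ x :: l, G.Adj w u ∧ c u = c w + 1 := by
    intro w hw
    obtain ⟨u, hu, hD⟩ := chain_succ_aux _ l x x hchain w hw
    refine ⟨u, ?_, hD⟩
    simp only [List.mem_cons, List.mem_append, List.mem_singleton] at hu ⊢
    tauto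
  -- distance to x and parent function
  have hstep : ∀ v, v ≠ x → ∃ u, G.Adj v u ∧ G.dist u x + 1 = G.dist v x := by
    intro v hv
    obtain ⟨q, hq⟩ := (hG.preconnected v x).exists_walk_length_eq_dist
    cases q with
    | nil => exact absurd rfl hv
    | @cons _ u _ hadj q' =>
      refine ⟨u, hadj, ?_⟩
      have h1 : G.dist u x ≤ q'.length := SimpleGraph.dist_le q'
      obtain ⟨r, hr⟩ := (hG.preconnected u x).exists_walk_length_eq_dist
      have h2 : G.dist v x ≤ r.length + 1 := by
        simpa using SimpleGraph.dist_le (SimpleGraph.Walk.cons hadj r)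
      simp only [SimpleGraph.Walk.length_cons] at hq
      omega
  set d : V → ℕ := fun v => G.dist v x with hd
  let p : V → V := fun v => if h : v = x then x else Classical.choose (hstep v h)
  have hp : ∀ v, v ≠ x → G.Adj v (p v) ∧ d (p v) + 1 = d v := by
    intro v h
    simpa only [p, dif_neg h] using Classical.choose_spec (hstep v h)
  have hpx : p x = x := by simp [p]
  -- obtain a sink-free proper coloring
  obtain ⟨c'', hproper, hsucc⟩ :=
    no_sink G χ hχ2 x p d hp hpx (x :: l) (List.mem_cons_self (a := x) (l := l)) c hxs
      (pot χ p d (Finset.univ.sup d + 1) (Fintype.card V * χ + 1) c + 1) c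
      (by omega) hc (fun w _ => rfl)
  -- build the walks
  choose f hf using hsucc
  refine ⟨c'', hproper, fun v => ⟨iterChain f (χ - 1) v, ?_, ?_, ?_⟩⟩
  · exact iterChain_chain' f (fun u => ⟨(hf u).1, (hf u).2⟩) (χ - 1) v
  · exact iterChain_head f (χ - 1) v
  · rw [iterChain_length]; omega
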